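/- Let M be a von Neumann algebra, H a Hilbert M-bimodule, and suppose the n-tuples of unit vectors (ξ_1,…,ξ_n) and (η_1,…,η_n) in H are almost δ-related. Then for every ε > 0 there exist a_1,…,a_p ∈ M such that for all 1 ≤ k ≤ n: ‖(1 − Σ_j a_j*a_j)ξ_k‖ < 2ε, ‖(1 − Σ_j a_j*a_j)η_k‖ < 2ε, ‖ξ_k(1 − Σ_j a_j*a_j)‖ < 2ε, ‖η_k(1 − Σ_j a_j*a_j)‖ < 2ε, ‖(1 − Σ_j a_j a_j*)ξ_k‖ < 2ε, ‖(1 − Σ_j a_j a_j*)η_k‖ < 2ε, ‖ξ_k(1 − Σ_j a_j a_j*)‖ < 2ε, ‖η_k(1 − Σ_j a_j a_j*)‖ < 2ε, Σ_j ‖a_j ξ_k − η_k a_j‖² < δ, Σ_j ‖a_j* η_k − ξ_k a_j*‖² < 2δ, ‖(Σ_j a_j*a_j)ξ_k‖ ≤ 1, ‖(Σ_j a_j*a_j)η_k‖ ≤ 1, ‖(Σ_j a_j a_j*)ξ_k‖ ≤ 1, and ‖(Σ_j a_j a_j*)η_k‖ ≤ 1. -/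

import Mathlib

noncomputable section

/-- A von Neumann algebra is closed under the complex scalar action. -/
instance VonNeumannAlgebra.instSMulMemClass {H : Type*} [NormedAddCommGroup H]
    [InnerProductSpace ℂ H] [CompleteSpace H] :
    SMulMemClass (VonNeumannAlgebra H) ℂ (H →L[ℂ] H) :=
  ⟨fun {s} c _ ha => s.toStarSubalgebra.smul_mem ha c⟩

/-- An element of a `*`-ring is positive if it is of the form `star z * z`. -/
def IsPosElem {A : Type*} [Mul A] [Star A] (x : A) : Prop :=
  ∃ z : A, x = star z * z

/-- A Hilbert bimodule over a concrete von Neumann algebra `M ⊆ B(K)`: a complex Hilbert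
space `E` together with a unital `*`-homomorphism `L : M → B(E)` (the left action) and a
unital `*`-antihomomorphism `M → B(E)` (the right action, encoded as a unital
`*`-homomorphism `R` on the opposite algebra `Mᵐᵒᵖ`) with commuting ranges. -/
structure HilbertBimodule {K : Type*} [NormedAddCommGroup K] [InnerProductSpace ℂ K]
    [CompleteSpace K] (M : VonNeumannAlgebra K)
    (E : Type*) [NormedAddCommGroup E] [InnerProductSpace ℂ E] [CompleteSpace E] where
  L : M →⋆ₐ[ℂ] (E →L[ℂ] E)
  R : (↥M)ᵐᵒᵖ →⋆ₐ[ℂ] (E →L[ℂ] E)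
  commutes : ∀ (x y : M) (ξ : E),
    L x (R (MulOpposite.op y) ξ) = R (MulOpposite.op y) (L x ξ)

namespace HilbertBimodule

variable {K : Type*} [NormedAddCommGroup K] [InnerProductSpace ℂ K] [CompleteSpace K]
  {M : VonNeumannAlgebra K} {E : Type*} [NormedAddCommGroup E] [InnerProductSpace ℂ E]
  [CompleteSpace E]

/-- The left action `x ξ`. -/
def lsmul (b : HilbertBimodule M E) (x : M) (ξ : E) : E := b.L x ξ

/-- The right action `ξ x`. -/
def rsmul (b : HilbertBimodule M E) (ξ : E) (x : M) : E := b.R (MulOpposite.op x) ξ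

end HilbertBimodule

/-- Two `n`-tuples of unit vectors in a Hilbert `M`-bimodule are almost `δ`-related. -/
def HilbertBimodule.AlmostRelated {K : Type*} [NormedAddCommGroup K] [InnerProductSpace ℂ K]
    [CompleteSpace K] {M : VonNeumannAlgebra K}
    {E : Type*} [NormedAddCommGroup E] [InnerProductSpace ℂ E] [CompleteSpace E]
    (b : HilbertBimodule M E) (δ : ℝ) {n : ℕ} (ξ η : Fin n → E) : Prop :=
  ∀ ε : ℝ, 0 < ε → ∃ (p : ℕ) (a : Fin p → M), ∀ k : Fin n,
    ‖b.lsmul (1 - ∑ j, star (a j) * a j) (ξ k)‖ < ε ∧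
    ‖b.lsmul (1 - ∑ j, star (a j) * a j) (η k)‖ < ε ∧
    ‖b.rsmul (ξ k) (1 - ∑ j, star (a j) * a j)‖ < ε ∧
    ‖b.rsmul (η k) (1 - ∑ j, star (a j) * a j)‖ < ε ∧
    ‖b.lsmul (1 - ∑ j, a j * star (a j)) (ξ k)‖ < ε ∧
    ‖b.lsmul (1 - ∑ j, a j * star (a j)) (η k)‖ < ε ∧
    ‖b.rsmul (ξ k) (1 - ∑ j, a j * star (a j))‖ < ε ∧
    ‖b.rsmul (η k) (1 - ∑ j, a j * star (a j))‖ < ε ∧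
    (∑ j, ‖b.lsmul (a j) (ξ k) - b.rsmul (η k) (a j)‖ ^ 2) < δ

namespace HilbertBimodule
open RCLike MulOpposite
variable {K : Type*} [NormedAddCommGroup K] [InnerProductSpace ℂ K] [CompleteSpace K]
  {M : VonNeumannAlgebra K} {E : Type*} [NormedAddCommGroup E] [InnerProductSpace ℂ E]
  [CompleteSpace E] (b : HilbertBimodule M E)

local notation "⟪" x ", " y "⟫" => @inner ℂ _ _ x y

lemma lsmul_one (ζ : E) : b.lsmul 1 ζ = ζ := by simp [lsmul, map_one]
lemma rsmul_one (ζ : E) : b.rsmul ζ 1 = ζ := by simp [rsmul, map_one]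

lemma inner_lsmul_left (x : M) (ζ χ : E) : ⟪b.lsmul x ζ, χ⟫ = ⟪ζ, b.lsmul (star x) χ⟫ := by
  simp only [lsmul, map_star]
  rw [ContinuousLinearMap.star_eq_adjoint, ContinuousLinearMap.adjoint_inner_right]

lemma inner_rsmul_left (x : M) (ζ χ : E) : ⟪b.rsmul ζ x, χ⟫ = ⟪ζ, b.rsmul χ (star x)⟫ := by
  simp only [rsmul, op_star, map_star]
  rw [ContinuousLinearMap.star_eq_adjoint, ContinuousLinearMap.adjoint_inner_right]

lemma lsmul_lsmul (x y : M) (ζ : E) : b.lsmul x (b.lsmul y ζ) = b.lsmul (x * y) ζ := by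
  simp [lsmul, map_mul]

lemma rsmul_rsmul (x y : M) (ζ : E) : b.rsmul (b.rsmul ζ x) y = b.rsmul ζ (x * y) := by
  simp only [rsmul, op_mul, map_mul, ContinuousLinearMap.mul_apply]

lemma lsmul_rsmul (x y : M) (ζ : E) : b.lsmul x (b.rsmul ζ y) = b.rsmul (b.lsmul x ζ) y :=
  b.commutes x y ζ

lemma norm_lsmul_sq (x : M) (ζ : E) : ‖b.lsmul x ζ‖^2 = re ⟪b.lsmul (star x * x) ζ, ζ⟫ := by
  rw [← lsmul_lsmul, inner_lsmul_left, star_star, @inner_self_eq_norm_sq ℂ E]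

lemma norm_rsmul_sq (x : M) (ζ : E) : ‖b.rsmul ζ x‖^2 = re ⟪b.rsmul ζ (x * star x), ζ⟫ := by
  rw [← rsmul_rsmul, inner_rsmul_left, star_star, @inner_self_eq_norm_sq ℂ E]

lemma re_inner_cross (a : M) (ζ χ : E) :
    re ⟪b.lsmul (star a) χ, b.rsmul ζ (star a)⟫ = re ⟪b.lsmul a ζ, b.rsmul χ a⟫ := by
  rw [inner_lsmul_left, star_star, lsmul_rsmul, ← inner_rsmul_left]
  rw [← inner_conj_symm (b.lsmul a ζ), conj_re]


lemma lsmul_sub (x y : M) (ζ : E) : b.lsmul (x - y) ζ = b.lsmul x ζ - b.lsmul y ζ := by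
  simp [lsmul, map_sub, ContinuousLinearMap.sub_apply]

lemma lsmul_add (x y : M) (ζ : E) : b.lsmul (x + y) ζ = b.lsmul x ζ + b.lsmul y ζ := by
  simp [lsmul, map_add, ContinuousLinearMap.add_apply]

lemma rsmul_add (x y : M) (ζ : E) : b.rsmul ζ (x + y) = b.rsmul ζ x + b.rsmul ζ y := by
  simp [rsmul, map_add, ContinuousLinearMap.add_apply]

lemma rsmul_sub (x y : M) (ζ : E) : b.rsmul ζ (x - y) = b.rsmul ζ x - b.rsmul ζ y := by
  simp [rsmul, map_sub, ContinuousLinearMap.sub_apply]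

lemma lsmul_smul (c : ℂ) (x : M) (ζ : E) : b.lsmul (c • x) ζ = c • b.lsmul x ζ := by
  simp [lsmul, map_smul, ContinuousLinearMap.smul_apply]

lemma rsmul_smul (c : ℂ) (x : M) (ζ : E) : b.rsmul ζ (c • x) = c • b.rsmul ζ x := by
  simp [rsmul, map_smul, ContinuousLinearMap.smul_apply]

lemma lsmul_sum {p : ℕ} (x : Fin p → M) (ζ : E) :
    b.lsmul (∑ j, x j) ζ = ∑ j, b.lsmul (x j) ζ := by
  simp [lsmul, map_sum, ContinuousLinearMap.sum_apply]

lemma rsmul_sum {p : ℕ} (x : Fin p → M) (ζ : E) :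
    b.rsmul ζ (∑ j, x j) = ∑ j, b.rsmul ζ (x j) := by
  have : op (∑ j, x j) = ∑ j, op (x j) := by
    simpa using map_sum (opAddEquiv : ↥M ≃+ (↥M)ᵐᵒᵖ) x Finset.univ
  simp [rsmul, this, map_sum, ContinuousLinearMap.sum_apply]


lemma sum_re_lsmul {p : ℕ} (x : Fin p → M) (ζ : E) :
    ∑ j, re ⟪b.lsmul (x j) ζ, ζ⟫ = re ⟪b.lsmul (∑ j, x j) ζ, ζ⟫ := by
  rw [lsmul_sum, sum_inner, map_sum]

lemma sum_re_rsmul {p : ℕ} (x : Fin p → M) (ζ : E) :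
    ∑ j, re ⟪b.rsmul ζ (x j), ζ⟫ = re ⟪b.rsmul ζ (∑ j, x j), ζ⟫ := by
  rw [rsmul_sum, sum_inner, map_sum]

lemma sum_sq_star_eq {p : ℕ} (a : Fin p → M) (u v : E) :
    ∑ j, ‖b.lsmul (star (a j)) v - b.rsmul u (star (a j))‖^2
    = (∑ j, ‖b.lsmul (a j) u - b.rsmul v (a j)‖^2)
      + (re ⟪b.lsmul (∑ j, a j * star (a j)) v, v⟫
          - re ⟪b.rsmul v (∑ j, a j * star (a j)), v⟫)
      + (re ⟪b.rsmul u (∑ j, star (a j) * a j), u⟫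
          - re ⟪b.lsmul (∑ j, star (a j) * a j) u, u⟫) := by
  have h1 : ∀ j, ‖b.lsmul (star (a j)) v - b.rsmul u (star (a j))‖^2
      = re ⟪b.lsmul (a j * star (a j)) v, v⟫ + re ⟪b.rsmul u (star (a j) * a j), u⟫
        - 2 * re ⟪b.lsmul (a j) u, b.rsmul v (a j)⟫ := by
    intro j
    rw [@norm_sub_sq ℂ E, norm_lsmul_sq, norm_rsmul_sq, re_inner_cross, star_star]
    ring
  have h2 : ∀ j, ‖b.lsmul (a j) u - b.rsmul v (a j)‖^2
      = re ⟪b.lsmul (star (a j) * a j) u, u⟫ + re ⟪b.rsmul v (a j * star (a j)), v⟫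
        - 2 * re ⟪b.lsmul (a j) u, b.rsmul v (a j)⟫ := by
    intro j
    rw [@norm_sub_sq ℂ E, norm_lsmul_sq, norm_rsmul_sq]
    ring
  simp only [h1, h2, Finset.sum_sub_distrib, Finset.sum_add_distrib, ← Finset.mul_sum,
    sum_re_lsmul, sum_re_rsmul]
  ring

lemma re_comm_bound (x : M) (ζ : E) (hζ : ‖ζ‖ = 1) :
    |re ⟪b.lsmul x ζ, ζ⟫ - re ⟪b.rsmul ζ x, ζ⟫|
      ≤ ‖b.lsmul (1 - x) ζ‖ + ‖b.rsmul ζ (1 - x)‖ := by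
  have hd : b.lsmul x ζ - b.rsmul ζ x = b.rsmul ζ (1 - x) - b.lsmul (1 - x) ζ := by
    rw [rsmul_sub, lsmul_sub, rsmul_one, lsmul_one]; abel
  have h1 : re ⟪b.lsmul x ζ, ζ⟫ - re ⟪b.rsmul ζ x, ζ⟫
      = re ⟪b.lsmul x ζ - b.rsmul ζ x, ζ⟫ := by
    rw [inner_sub_left, map_sub]
  rw [h1]
  calc |re ⟪b.lsmul x ζ - b.rsmul ζ x, ζ⟫| ≤ ‖b.lsmul x ζ - b.rsmul ζ x‖ * ‖ζ‖ :=
        (RCLike.abs_re_le_norm _).trans (norm_inner_le_norm _ _)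
    _ = ‖b.rsmul ζ (1 - x) - b.lsmul (1 - x) ζ‖ := by rw [hd, hζ, mul_one]
    _ ≤ ‖b.rsmul ζ (1 - x)‖ + ‖b.lsmul (1 - x) ζ‖ := norm_sub_le _ _
    _ = _ := by ring

lemma lsmul_scale_bounds (P : M) (ζ : E) (hζ : ‖ζ‖ = 1) {c ε' : ℝ} (hc0 : 0 ≤ c)
    (hkey : (1 - c) * (1 + ε') = ε') (hε' : 0 < ε')
    (hl : ‖b.lsmul (1 - P) ζ‖ < ε') :
    ‖b.lsmul (1 - (c:ℂ) • P) ζ‖ < 2 * ε' ∧ ‖b.lsmul ((c:ℂ) • P) ζ‖ ≤ 1 := by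
  have hc1 : c ≤ 1 := by nlinarith
  have hA : ‖b.lsmul P ζ‖ < 1 + ε' := by
    have : b.lsmul P ζ = ζ - b.lsmul (1 - P) ζ := by
      rw [lsmul_sub, lsmul_one]; abel
    rw [this]
    calc ‖ζ - b.lsmul (1 - P) ζ‖ ≤ ‖ζ‖ + ‖b.lsmul (1 - P) ζ‖ := norm_sub_le _ _
      _ < 1 + ε' := by rw [hζ]; linarith
  have hdecomp : (1 : M) - (c:ℂ) • P = (1 - P) + ((1 - c : ℝ):ℂ) • P := by
    push_cast
    rw [sub_smul, one_smul]
    abel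
  constructor
  · rw [hdecomp, lsmul_add, lsmul_smul]
    calc ‖b.lsmul (1 - P) ζ + ((1 - c : ℝ):ℂ) • b.lsmul P ζ‖
        ≤ ‖b.lsmul (1 - P) ζ‖ + ‖((1 - c : ℝ):ℂ) • b.lsmul P ζ‖ := norm_add_le _ _
      _ = ‖b.lsmul (1 - P) ζ‖ + (1 - c) * ‖b.lsmul P ζ‖ := by
          rw [norm_smul, Complex.norm_real, Real.norm_eq_abs, abs_of_nonneg (by linarith)]
      _ < ε' + (1 - c) * (1 + ε') := by
          have h1c : 0 ≤ 1 - c := by linarith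
          rcases eq_or_lt_of_le h1c with h | h
          · rw [← h]; simpa using hl
          · exact add_lt_add hl (by nlinarith)
      _ = 2 * ε' := by rw [hkey]; ring
  · have : ‖b.lsmul ((c:ℂ) • P) ζ‖ = c * ‖b.lsmul P ζ‖ := by
      rw [lsmul_smul, norm_smul, Complex.norm_real, Real.norm_eq_abs, abs_of_nonneg hc0]
    rw [this]
    nlinarith


lemma rsmul_scale_bounds (P : M) (ζ : E) (hζ : ‖ζ‖ = 1) {c ε' : ℝ} (hc0 : 0 ≤ c)
    (hkey : (1 - c) * (1 + ε') = ε') (hε' : 0 < ε')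
    (hl : ‖b.rsmul ζ (1 - P)‖ < ε') :
    ‖b.rsmul ζ (1 - (c:ℂ) • P)‖ < 2 * ε' ∧ ‖b.rsmul ζ ((c:ℂ) • P)‖ ≤ 1 := by
  have hc1 : c ≤ 1 := by nlinarith
  have hA : ‖b.rsmul ζ P‖ < 1 + ε' := by
    have : b.rsmul ζ P = ζ - b.rsmul ζ (1 - P) := by
      rw [rsmul_sub, rsmul_one]; abel
    rw [this]
    calc ‖ζ - b.rsmul ζ (1 - P)‖ ≤ ‖ζ‖ + ‖b.rsmul ζ (1 - P)‖ := norm_sub_le _ _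
      _ < 1 + ε' := by rw [hζ]; linarith
  have hdecomp : (1 : M) - (c:ℂ) • P = (1 - P) + ((1 - c : ℝ):ℂ) • P := by
    push_cast
    rw [sub_smul, one_smul]
    abel
  constructor
  · rw [hdecomp, rsmul_add, rsmul_smul]
    calc ‖b.rsmul ζ (1 - P) + ((1 - c : ℝ):ℂ) • b.rsmul ζ P‖
        ≤ ‖b.rsmul ζ (1 - P)‖ + ‖((1 - c : ℝ):ℂ) • b.rsmul ζ P‖ := norm_add_le _ _
      _ = ‖b.rsmul ζ (1 - P)‖ + (1 - c) * ‖b.rsmul ζ P‖ := by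
          rw [norm_smul, Complex.norm_real, Real.norm_eq_abs, abs_of_nonneg (by linarith)]
      _ < ε' + (1 - c) * (1 + ε') := by
          have h1c : 0 ≤ 1 - c := by linarith
          rcases eq_or_lt_of_le h1c with h | h
          · rw [← h]; simpa using hl
          · exact add_lt_add hl (by nlinarith)
      _ = 2 * ε' := by rw [hkey]; ring
  · have : ‖b.rsmul ζ ((c:ℂ) • P)‖ = c * ‖b.rsmul ζ P‖ := by
      rw [rsmul_smul, norm_smul, Complex.norm_real, Real.norm_eq_abs, abs_of_nonneg hc0]
    rw [this]
    nlinarith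

end HilbertBimodule

theorem remark_almost2 {K : Type*} [NormedAddCommGroup K] [InnerProductSpace ℂ K]
    [CompleteSpace K] {M : VonNeumannAlgebra K}
    {E : Type*} [NormedAddCommGroup E] [InnerProductSpace ℂ E] [CompleteSpace E]
    (b : HilbertBimodule M E) {n : ℕ} (ξ η : Fin n → E)
    (hξ : ∀ k, ‖ξ k‖ = 1) (hη : ∀ k, ‖η k‖ = 1)
    (δ : ℝ) (hδ : 0 < δ) (hrel : b.AlmostRelated δ ξ η) :
    ∀ ε : ℝ, 0 < ε → ∃ (p : ℕ) (a : Fin p → M), ∀ k : Fin n,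
      ‖b.lsmul (1 - ∑ j, star (a j) * a j) (ξ k)‖ < 2 * ε ∧
      ‖b.lsmul (1 - ∑ j, star (a j) * a j) (η k)‖ < 2 * ε ∧
      ‖b.rsmul (ξ k) (1 - ∑ j, star (a j) * a j)‖ < 2 * ε ∧
      ‖b.rsmul (η k) (1 - ∑ j, star (a j) * a j)‖ < 2 * ε ∧
      ‖b.lsmul (1 - ∑ j, a j * star (a j)) (ξ k)‖ < 2 * ε ∧
      ‖b.lsmul (1 - ∑ j, a j * star (a j)) (η k)‖ < 2 * ε ∧
      ‖b.rsmul (ξ k) (1 - ∑ j, a j * star (a j))‖ < 2 * ε ∧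
      ‖b.rsmul (η k) (1 - ∑ j, a j * star (a j))‖ < 2 * ε ∧
      (∑ j, ‖b.lsmul (a j) (ξ k) - b.rsmul (η k) (a j)‖ ^ 2) < δ ∧
      (∑ j, ‖b.lsmul (star (a j)) (η k) - b.rsmul (ξ k) (star (a j))‖ ^ 2) < 2 * δ ∧
      ‖b.lsmul (∑ j, star (a j) * a j) (ξ k)‖ ≤ 1 ∧
      ‖b.lsmul (∑ j, star (a j) * a j) (η k)‖ ≤ 1 ∧
      ‖b.lsmul (∑ j, a j * star (a j)) (ξ k)‖ ≤ 1 ∧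
      ‖b.lsmul (∑ j, a j * star (a j)) (η k)‖ ≤ 1 := by
  intro ε hε
  set ε' : ℝ := min ε (δ/4) with hε'def
  have hε'pos : 0 < ε' := lt_min hε (by linarith)
  have hε'ε : ε' ≤ ε := min_le_left _ _
  have hε'δ : ε' ≤ δ/4 := min_le_right _ _
  obtain ⟨p, a, ha⟩ := hrel ε' hε'pos
  have h1ε : (0:ℝ) < 1 + ε' := by linarith
  set c : ℝ := 1/(1+ε') with hcdef
  have hc0 : 0 < c := by positivity
  have hkey : (1 - c) * (1 + ε') = ε' := by rw [hcdef]; field_simp; ring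
  have hc1 : c ≤ 1 := by nlinarith
  set t : ℝ := Real.sqrt c with htdef
  have ht0 : 0 ≤ t := Real.sqrt_nonneg _
  have ht2 : t * t = c := Real.mul_self_sqrt hc0.le
  set a' : Fin p → M := fun j => (t:ℂ) • a j with ha'def
  have hstar : ∀ j, star (a' j) = (t:ℂ) • star (a j) := fun j => by
    rw [ha'def, star_smul, Complex.star_def, Complex.conj_ofReal]
  have hS : (∑ j, star (a' j) * a' j) = (c:ℂ) • (∑ j, star (a j) * a j) := by
    rw [Finset.smul_sum]
    refine Finset.sum_congr rfl fun j _ => ?_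
    rw [hstar, ha'def, smul_mul_smul_comm, ← Complex.ofReal_mul, ht2]
  have hT : (∑ j, a' j * star (a' j)) = (c:ℂ) • (∑ j, a j * star (a j)) := by
    rw [Finset.smul_sum]
    refine Finset.sum_congr rfl fun j _ => ?_
    rw [hstar, ha'def, smul_mul_smul_comm, ← Complex.ofReal_mul, ht2]
  refine ⟨p, a', fun k => ?_⟩
  obtain ⟨h1, h2, h3, h4, h5, h6, h7, h8, h9⟩ := ha k
  have two_eps : 2 * ε' ≤ 2 * ε := by linarith
  have lS1 := b.lsmul_scale_bounds _ (ξ k) (hξ k) hc0.le hkey hε'pos h1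
  have lS2 := b.lsmul_scale_bounds _ (η k) (hη k) hc0.le hkey hε'pos h2
  have rS1 := b.rsmul_scale_bounds _ (ξ k) (hξ k) hc0.le hkey hε'pos h3
  have rS2 := b.rsmul_scale_bounds _ (η k) (hη k) hc0.le hkey hε'pos h4
  have lT1 := b.lsmul_scale_bounds _ (ξ k) (hξ k) hc0.le hkey hε'pos h5
  have lT2 := b.lsmul_scale_bounds _ (η k) (hη k) hc0.le hkey hε'pos h6
  have rT1 := b.rsmul_scale_bounds _ (ξ k) (hξ k) hc0.le hkey hε'pos h7
  have rT2 := b.rsmul_scale_bounds _ (η k) (hη k) hc0.le hkey hε'pos h8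
  -- scaled sums
  have hscale : ∀ (u v : E), (∑ j, ‖b.lsmul (a' j) u - b.rsmul v (a' j)‖ ^ 2)
      = c * ∑ j, ‖b.lsmul (a j) u - b.rsmul v (a j)‖ ^ 2 := by
    intro u v
    rw [Finset.mul_sum]
    refine Finset.sum_congr rfl fun j _ => ?_
    rw [ha'def]
    rw [HilbertBimodule.lsmul_smul, HilbertBimodule.rsmul_smul, ← smul_sub, norm_smul,
      Complex.norm_real, Real.norm_eq_abs, abs_of_nonneg ht0, mul_pow, sq, ht2]
  have hscaleStar : (∑ j, ‖b.lsmul (star (a' j)) (η k) - b.rsmul (ξ k) (star (a' j))‖ ^ 2)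
      = c * ∑ j, ‖b.lsmul (star (a j)) (η k) - b.rsmul (ξ k) (star (a j))‖ ^ 2 := by
    rw [Finset.mul_sum]
    refine Finset.sum_congr rfl fun j _ => ?_
    rw [hstar j, HilbertBimodule.lsmul_smul, HilbertBimodule.rsmul_smul, ← smul_sub, norm_smul,
      Complex.norm_real, Real.norm_eq_abs, abs_of_nonneg ht0, mul_pow, sq, ht2]
  have sumnn : (0:ℝ) ≤ ∑ j, ‖b.lsmul (a j) (ξ k) - b.rsmul (η k) (a j)‖ ^ 2 :=
    Finset.sum_nonneg fun j _ => sq_nonneg _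
  have sumnnStar : (0:ℝ) ≤ ∑ j, ‖b.lsmul (star (a j)) (η k) - b.rsmul (ξ k) (star (a j))‖ ^ 2 :=
    Finset.sum_nonneg fun j _ => sq_nonneg _
  have hX : (∑ j, ‖b.lsmul (star (a j)) (η k) - b.rsmul (ξ k) (star (a j))‖ ^ 2) < δ + 4 * ε' := by
    rw [b.sum_sq_star_eq a (ξ k) (η k)]
    have hb1 := abs_le.mp (b.re_comm_bound (∑ j, a j * star (a j)) (η k) (hη k))
    have hb2 := abs_le.mp (b.re_comm_bound (∑ j, star (a j) * a j) (ξ k) (hξ k))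
    have e1 : ‖b.lsmul (1 - ∑ j, a j * star (a j)) (η k)‖
        + ‖b.rsmul (η k) (1 - ∑ j, a j * star (a j))‖ < 2 * ε' := by linarith
    have e2 : ‖b.lsmul (1 - ∑ j, star (a j) * a j) (ξ k)‖
        + ‖b.rsmul (ξ k) (1 - ∑ j, star (a j) * a j)‖ < 2 * ε' := by linarith
    linarith [hb1.1, hb1.2, hb2.1, hb2.2]
  refine ⟨?_, ?_, ?_, ?_, ?_, ?_, ?_, ?_, ?_, ?_, ?_, ?_, ?_, ?_⟩
  · rw [hS]; exact lt_of_lt_of_le lS1.1 two_eps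
  · rw [hS]; exact lt_of_lt_of_le lS2.1 two_eps
  · rw [hS]; exact lt_of_lt_of_le rS1.1 two_eps
  · rw [hS]; exact lt_of_lt_of_le rS2.1 two_eps
  · rw [hT]; exact lt_of_lt_of_le lT1.1 two_eps
  · rw [hT]; exact lt_of_lt_of_le lT2.1 two_eps
  · rw [hT]; exact lt_of_lt_of_le rT1.1 two_eps
  · rw [hT]; exact lt_of_lt_of_le rT2.1 two_eps
  · rw [hscale]
    calc c * ∑ j, ‖b.lsmul (a j) (ξ k) - b.rsmul (η k) (a j)‖ ^ 2
        ≤ ∑ j, ‖b.lsmul (a j) (ξ k) - b.rsmul (η k) (a j)‖ ^ 2 :=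
          mul_le_of_le_one_left sumnn hc1
      _ < δ := h9
  · rw [hscaleStar]
    calc c * ∑ j, ‖b.lsmul (star (a j)) (η k) - b.rsmul (ξ k) (star (a j))‖ ^ 2
        ≤ ∑ j, ‖b.lsmul (star (a j)) (η k) - b.rsmul (ξ k) (star (a j))‖ ^ 2 :=
          mul_le_of_le_one_left sumnnStar hc1
      _ < δ + 4 * ε' := hX
      _ ≤ 2 * δ := by linarith
  · rw [hS]; exact lS1.2
  · rw [hS]; exact lS2.2
  · rw [hT]; exact lT1.2
  · rw [hT]; exact lT2.2
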